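/- arXiv:2401.13788 — 6 statements merged into one kernel-verified Lean document; each statement's English description precedes it below -/
import Mathlib

section
/- The involutive cones of two distinct monomials are either disjoint or one of the monomials involutively divides the other. Equivalently: if the involutive cones C(x^μ) and C(x^ν) have a common element, then x^μ involutively divides x^ν or x^ν involutively divides x^μ. -/
/-- The class of an exponent vector: the least index with nonzero exponent. -/
noncomputable def cls {n : ℕ} (μ : Fin n → ℕ) : ℕ := sInf {i : ℕ | ∃ hi : i < n, μ ⟨i, hi⟩ ≠ 0}

/-- Pommaret involutive divisibility: `μ` divides `ν` and the quotient only
involves the multiplicative variables `x_1, …, x_{cls μ}` of `μ`. -/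
def InvDvd {n : ℕ} (μ ν : Fin n → ℕ) : Prop :=
  (∀ i, μ i ≤ ν i) ∧ ∀ i : Fin n, cls μ < (i : ℕ) → ν i = μ i

/-- Membership of a monomial in the monomial ideal generated by `H`. -/
def MemMonIdeal {n : ℕ} (H : Set (Fin n → ℕ)) (ν : Fin n → ℕ) : Prop :=
  ∃ h ∈ H, ∀ i, h i ≤ ν i

lemma cls_eq_zero_of_lt {n : ℕ} {μ : Fin n → ℕ} {i : Fin n} (h : (i : ℕ) < cls μ) :
    μ i = 0 := by
  by_contra hne
  have : cls μ ≤ (i : ℕ) := Nat.sInf_le ⟨i.isLt, by simpa using hne⟩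
  omega

lemma aux_invDvd {n : ℕ} {μ ν ρ : Fin n → ℕ} (h₁ : InvDvd μ ρ) (h₂ : InvDvd ν ρ)
    (hc : cls ν ≤ cls μ) (hcc : ∀ i : Fin n, (i : ℕ) = cls μ → μ i ≤ ν i) :
    InvDvd μ ν := by
  obtain ⟨hμle, hμeq⟩ := h₁
  obtain ⟨hνle, hνeq⟩ := h₂
  constructor
  · intro i
    rcases lt_trichotomy ((i : ℕ)) (cls μ) with h | h | h
    · simp [cls_eq_zero_of_lt h]
    · exact hcc i h
    · have := hνeq i (lt_of_le_of_lt hc h)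
      have := hμle i
      omega
  · intro i hi
    have h1 := hμeq i hi
    have h2 := hνeq i (lt_of_le_of_lt hc hi)
    omega

/-- If the involutive cones of two monomials have a common element, then one
of the two monomials involutively divides the other. -/
theorem invDvd_of_common_cone_element {n : ℕ} {μ ν ρ : Fin n → ℕ}
    (h₁ : InvDvd μ ρ) (h₂ : InvDvd ν ρ) : InvDvd μ ν ∨ InvDvd ν μ := by
  rcases lt_trichotomy (cls μ) (cls ν) with h | h | h
  · right
    refine aux_invDvd h₂ h₁ h.le fun i hi => ?_
    have := h₁.2 i (by omega)
    have := h₂.1 i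
    omega
  · by_cases h' : ∀ i : Fin n, (i : ℕ) = cls μ → μ i ≤ ν i
    · exact Or.inl (aux_invDvd h₁ h₂ h.ge h')
    · right
      refine aux_invDvd h₂ h₁ h.le fun i hi => ?_
      push_neg at h'
      obtain ⟨j, hj, hlt⟩ := h'
      have : i = j := Fin.ext (by omega)
      subst this
      omega
  · left
    refine aux_invDvd h₁ h₂ h.le fun i hi => ?_
    have := h₂.2 i (by omega)
    have := h₁.1 i
    omega
end

section
/- A monomial ideal I is stable if and only if its minimal monomial generating set is a Pommaret basis for I. -/
/-- A set of exponent vectors is (the set of monomials of) a monomial ideal if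
it is closed under taking monomial multiples. -/
def IsMonIdeal {n : ℕ} (S : Set (Fin n → ℕ)) : Prop :=
  ∀ μ ∈ S, ∀ ν : Fin n → ℕ, (∀ i, μ i ≤ ν i) → ν ∈ S

/-- The elementary move of stability: replace x^μ by x^μ · x_i / x_{cls μ}. -/
noncomputable def bump {n : ℕ} (μ : Fin n → ℕ) (i : Fin n) : Fin n → ℕ :=
  fun j => if (j : ℕ) = cls μ then μ j - 1 else if j = i then μ j + 1 else μ j

/-- A monomial ideal is stable if for every monomial x^μ in it and every index
i greater than the class of μ, the monomial x^μ · x_i / x_{cls μ} is in it. -/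
def IsStable {n : ℕ} (S : Set (Fin n → ℕ)) : Prop :=
  ∀ μ ∈ S, ∀ i : Fin n, cls μ < (i : ℕ) → bump μ i ∈ S

/-- The minimal monomial generating set: monomials of S not properly divisible
by another monomial of S. -/
def MinGen {n : ℕ} (S : Set (Fin n → ℕ)) : Set (Fin n → ℕ) :=
  {g | g ∈ S ∧ ∀ ν ∈ S, (∀ i, ν i ≤ g i) → ν = g}

/-- A monomial ideal is quasi-stable if it possesses a finite Pommaret basis:
a finite generating set H such that every monomial of the ideal has exactly
one involutive divisor in H. -/
def IsQuasiStable {n : ℕ} (S : Set (Fin n → ℕ)) : Prop :=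
  ∃ H : Finset (Fin n → ℕ), (∀ ν, ν ∈ S ↔ MemMonIdeal ↑H ν) ∧
    ∀ ν ∈ S, ∃! h, h ∈ H ∧ InvDvd h ν

section Helpers

lemma cls_spec {n : ℕ} {μ : Fin n → ℕ} (h : μ ≠ 0) :
    ∃ hc : cls μ < n, μ ⟨cls μ, hc⟩ ≠ 0 := by
  have hne : {i : ℕ | ∃ hi : i < n, μ ⟨i, hi⟩ ≠ 0}.Nonempty := by
    rcases Function.ne_iff.mp h with ⟨i, hi⟩
    exact ⟨(i : ℕ), i.isLt, hi⟩
  exact Nat.sInf_mem hne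

lemma cls_le {n : ℕ} {μ : Fin n → ℕ} {k : Fin n} (h : μ k ≠ 0) : cls μ ≤ (k : ℕ) :=
  Nat.sInf_le ⟨k.isLt, h⟩

lemma eq_zero_of_lt_cls {n : ℕ} {μ : Fin n → ℕ} {k : Fin n} (h : (k : ℕ) < cls μ) : μ k = 0 := by
  by_contra hk; exact absurd (cls_le hk) (not_le.mpr h)

lemma invdvd_unique {n : ℕ} {S : Set (Fin n → ℕ)} (h0 : (0 : Fin n → ℕ) ∉ S)
    {ν g₁ g₂ : Fin n → ℕ} (h₁ : g₁ ∈ MinGen S) (h₂ : g₂ ∈ MinGen S)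
    (d₁ : InvDvd g₁ ν) (d₂ : InvDvd g₂ ν) : g₁ = g₂ := by
  have hn₁ : g₁ ≠ 0 := fun h => h0 (h ▸ h₁.1)
  have hn₂ : g₂ ≠ 0 := fun h => h0 (h ▸ h₂.1)
  have key : ∀ (a b : Fin n → ℕ), InvDvd a ν → InvDvd b ν →
      cls a < cls b → ∀ k, b k ≤ a k := by
    intro a b da db hab k
    rcases lt_or_ge (k : ℕ) (cls b) with hk | hk
    · rw [eq_zero_of_lt_cls hk]; exact Nat.zero_le _
    · rw [← da.2 k (lt_of_lt_of_le hab hk)]; exact db.1 k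
  rcases lt_trichotomy (cls g₁) (cls g₂) with h | h | h
  · exact (h₁.2 g₂ h₂.1 (key g₁ g₂ d₁ d₂ h)).symm
  · obtain ⟨hc, _⟩ := cls_spec hn₁
    have hsame : ∀ (a b : Fin n → ℕ), InvDvd a ν → InvDvd b ν →
        cls a = cls g₁ → cls b = cls g₁ →
        a ⟨cls g₁, hc⟩ ≤ b ⟨cls g₁, hc⟩ → ∀ k, a k ≤ b k := by
      intro a b da db hca hcb hab k
      rcases lt_trichotomy (k : ℕ) (cls g₁) with hk | hk | hk
      · rw [eq_zero_of_lt_cls (show (k : ℕ) < cls a by omega)]; exact Nat.zero_le _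
      · have : k = ⟨cls g₁, hc⟩ := Fin.ext hk
        rw [this]; exact hab
      · rw [← da.2 k (by omega), ← db.2 k (by omega)]
    rcases le_total (g₁ ⟨cls g₁, hc⟩) (g₂ ⟨cls g₁, hc⟩) with hle | hle
    · exact h₂.2 g₁ h₁.1 (hsame g₁ g₂ d₁ d₂ rfl h.symm hle)
    · exact (h₁.2 g₂ h₂.1 (hsame g₂ g₁ d₂ d₁ h.symm rfl hle)).symm
  · exact h₂.2 g₁ h₁.1 (key g₂ g₁ d₂ d₁ h)

lemma exists_invdvd {n : ℕ} {S : Set (Fin n → ℕ)} (hS : IsMonIdeal S)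
    (h0 : (0 : Fin n → ℕ) ∉ S) (hst : IsStable S) :
    ∀ N (ν : Fin n → ℕ), (∑ i, ν i) < N → ν ∈ S → ∃ g ∈ MinGen S, InvDvd g ν := by
  intro N
  induction N with
  | zero => exact fun ν h _ => absurd h (Nat.not_lt_zero _)
  | succ N ih =>
    intro ν hdeg hν
    by_cases hmin : ν ∈ MinGen S
    · exact ⟨ν, hmin, fun i => le_refl _, fun i _ => rfl⟩
    · have hex : ∃ μ ∈ S, (∀ i, μ i ≤ ν i) ∧ μ ≠ ν := by
        by_contra hcon
        push_neg at hcon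
        exact hmin ⟨hν, fun μ hμ hle => hcon μ hμ hle⟩
      obtain ⟨μ, hμS, hμle, hμne⟩ := hex
      obtain ⟨j, hj⟩ : ∃ j, μ j < ν j := by
        by_contra hcon; push_neg at hcon
        exact hμne (funext fun i => le_antisymm (hμle i) (hcon i))
      set ν' : Fin n → ℕ := Function.update ν j (ν j - 1) with hν'
      have hν'j : ν' j = ν j - 1 := by simp [hν']
      have hν'k : ∀ k, k ≠ j → ν' k = ν k := by
        intro k hk; simp [hν', Function.update, hk]
      have hν'le : ∀ k, ν' k ≤ ν k := by
        intro k
        by_cases hk : k = j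
        · subst hk; rw [hν'j]; omega
        · rw [hν'k k hk]
      have hν'S : ν' ∈ S := hS μ hμS ν' (by
        intro k
        by_cases hk : k = j
        · subst hk; rw [hν'j]; omega
        · rw [hν'k k hk]; exact hμle k)
      have hdeg' : (∑ i, ν' i) < N := by
        have hlt : (∑ i, ν' i) < ∑ i, ν i :=
          Finset.sum_lt_sum (fun i _ => hν'le i)
            ⟨j, Finset.mem_univ j, by rw [hν'j]; omega⟩
        omega
      obtain ⟨g, hgMin, hgdvd⟩ := ih ν' hdeg' hν'S
      have hgS : g ∈ S := hgMin.1
      have hg0 : g ≠ 0 := fun h => h0 (h ▸ hgS)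
      rcases le_or_gt (j : ℕ) (cls g) with hcase | hcase
      · refine ⟨g, hgMin, fun k => le_trans (hgdvd.1 k) (hν'le k), fun k hk => ?_⟩
        have hkj : k ≠ j := by
          intro h; subst h; omega
        rw [← hν'k k hkj]; exact hgdvd.2 k hk
      · obtain ⟨hc, hgc⟩ := cls_spec hg0
        set h := bump g j with hh
        have hhS : h ∈ S := hst g hgS j hcase
        have hh0 : h ≠ 0 := fun he => h0 (he ▸ hhS)
        have hbval : ∀ k : Fin n, h k =
            if (k : ℕ) = cls g then g k - 1 else if k = j then g k + 1 else g k := fun k => rfl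
        have hνj1 : 1 ≤ ν j := by omega
        have hgj : g j = ν j - 1 := by rw [← hν'j]; exact (hgdvd.2 j hcase).symm
        have hble : ∀ k, h k ≤ ν k := by
          intro k
          rw [hbval]
          by_cases h1 : (k : ℕ) = cls g
          · simp only [h1, if_pos rfl]
            exact le_trans (Nat.sub_le _ _) (le_trans (hgdvd.1 k) (hν'le k))
          · by_cases h2 : k = j
            · subst h2
              rw [if_neg h1, if_pos rfl, hgj]; omega
            · simp only [h1, h2, ite_false]
              exact le_trans (hgdvd.1 k) (hν'le k)
        have heq : ∀ k : Fin n, cls g < (k : ℕ) → h k = ν k := by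
          intro k hk
          rw [hbval]
          have h1 : ¬ ((k : ℕ) = cls g) := by omega
          by_cases h2 : k = j
          · subst h2
            rw [if_neg h1, if_pos rfl, hgj]; omega
          · simp only [h1, h2, ite_false]
            rw [← hν'k k h2]; exact (hgdvd.2 k hk).symm
        have hclsh : cls g ≤ cls h := by
          obtain ⟨hch, hvh⟩ := cls_spec hh0
          by_contra hcon
          push_neg at hcon
          apply hvh
          rw [hbval]
          have h1 : ¬ ((cls h : ℕ) = cls g) := by omega
          have h2 : (⟨cls h, hch⟩ : Fin n) ≠ j := by
            intro he
            have : cls h = (j : ℕ) := congrArg Fin.val he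
            omega
          simp only [h1, h2, ite_false]
          exact eq_zero_of_lt_cls (show ((⟨cls h, hch⟩ : Fin n) : ℕ) < cls g from hcon)
        have hdegh : (∑ i, h i) < N := by
          have hlt : (∑ i, h i) < ∑ i, ν i := by
            refine Finset.sum_lt_sum (fun i _ => hble i) ⟨⟨cls g, hc⟩, Finset.mem_univ _, ?_⟩
            have : h ⟨cls g, hc⟩ = g ⟨cls g, hc⟩ - 1 := by
              rw [hbval]; simp
            rw [this]
            have := le_trans (hgdvd.1 ⟨cls g, hc⟩) (hν'le ⟨cls g, hc⟩)
            omega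
          omega
        obtain ⟨g', hg'Min, hg'dvd⟩ := ih h hdegh hhS
        have hg'0 : g' ≠ 0 := fun he => h0 (he ▸ hg'Min.1)
        have hclsg' : cls h ≤ cls g' := by
          obtain ⟨hcg', hvg'⟩ := cls_spec hg'0
          exact cls_le (show h ⟨cls g', hcg'⟩ ≠ 0 by
            have := hg'dvd.1 ⟨cls g', hcg'⟩
            omega)
        refine ⟨g', hg'Min, fun k => le_trans (hg'dvd.1 k) (hble k), fun k hk => ?_⟩
        rw [← heq k (by omega)]
        exact hg'dvd.2 k hk

end Helpers

/-- A monomial ideal is stable if and only if its minimal monomial generating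
set is a Pommaret basis for it. -/
theorem isStable_iff_minGen_pommaretBasis {n : ℕ} (S : Set (Fin n → ℕ))
    (hS : IsMonIdeal S) (h0 : (0 : Fin n → ℕ) ∉ S) :
    IsStable S ↔ ∀ ν ∈ S, ∃! g, g ∈ MinGen S ∧ InvDvd g ν := by
  constructor
  · intro hst ν hν
    obtain ⟨g, hg, hd⟩ :=
      exists_invdvd hS h0 hst ((∑ i, ν i) + 1) ν (Nat.lt_succ_self _) hν
    exact ⟨g, ⟨hg, hd⟩, fun g' hg' => invdvd_unique h0 hg'.1 hg hg'.2 hd⟩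
  · intro hPB μ hμ i hi
    have hμ0 : μ ≠ 0 := fun h => h0 (h ▸ hμ)
    obtain ⟨hc, hμc⟩ := cls_spec hμ0
    have hki : (⟨cls μ, hc⟩ : Fin n) ≠ i := by
      intro he
      have : cls μ = (i : ℕ) := congrArg Fin.val he
      omega
    set ν : Fin n → ℕ := Function.update μ i (μ i + 1) with hνdef
    have hνi : ν i = μ i + 1 := by simp [hνdef]
    have hνk : ∀ k, k ≠ i → ν k = μ k := by
      intro k hk; simp [hνdef, Function.update, hk]
    have hνS : ν ∈ S := hS μ hμ ν (by
      intro k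
      by_cases hk : k = i
      · subst hk; rw [hνi]; omega
      · rw [hνk k hk])
    obtain ⟨g, ⟨hgMin, hgd⟩, -⟩ := hPB ν hνS
    have hgS : g ∈ S := hgMin.1
    have hkey : g ⟨cls μ, hc⟩ < μ ⟨cls μ, hc⟩ := by
      by_contra hcon
      push_neg at hcon
      have h1 : g ⟨cls μ, hc⟩ ≤ ν ⟨cls μ, hc⟩ := hgd.1 _
      rw [hνk _ hki] at h1
      have heqc : g ⟨cls μ, hc⟩ = μ ⟨cls μ, hc⟩ := le_antisymm h1 hcon
      have hclsg : cls g ≤ cls μ := cls_le (k := ⟨cls μ, hc⟩) (by rw [heqc]; exact hμc)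
      have hle : ∀ k, μ k ≤ g k := by
        intro k
        rcases lt_trichotomy (k : ℕ) (cls μ) with h | h | h
        · rw [eq_zero_of_lt_cls h]; exact Nat.zero_le _
        · have : k = ⟨cls μ, hc⟩ := Fin.ext h
          rw [this, heqc]
        · rw [← hgd.2 k (by omega)]
          by_cases hk : k = i
          · subst hk; rw [hνi]; omega
          · rw [hνk k hk]
      have hμg : μ = g := hgMin.2 μ hμ hle
      have hgi : ν i = g i := hgd.2 i (by omega)
      rw [hνi, ← hμg] at hgi
      omega
    apply hS g hgS
    intro k
    show g k ≤ bump μ i k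
    have hbval : bump μ i k =
        if (k : ℕ) = cls μ then μ k - 1 else if k = i then μ k + 1 else μ k := rfl
    rw [hbval]
    by_cases h1 : (k : ℕ) = cls μ
    · rw [if_pos h1]
      have hk2 : k = ⟨cls μ, hc⟩ := Fin.ext h1
      rw [hk2]
      omega
    · by_cases h2 : k = i
      · subst h2
        simp only [h1, ite_false, if_pos rfl]
        have := hgd.1 k
        rw [hνi] at this
        exact this
      · simp only [h1, h2, ite_false]
        have := hgd.1 k
        rw [hνk k h2] at this
        exact this
end

section
/- A monomial ideal I ⊆ k[x_1,...,x_n] is quasi-stable (possesses a finite Pommaret basis) if and only if for every monomial x^μ ∈ I and all indices 1 ≤ i < j ≤ n with x_i dividing x^μ, there exists an integer t > 0 such that x_j^t · x^μ / x_i^{μ_i} ∈ I. -/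
/-! ### Auxiliary lemmas about `cls` -/

namespace QS

lemma cls_le {n : ℕ} {ν : Fin n → ℕ} {l : Fin n} (h : ν l ≠ 0) : cls ν ≤ (l : ℕ) :=
  Nat.sInf_le ⟨l.2, by simpa using h⟩

lemma cls_spec {n : ℕ} {ν : Fin n → ℕ} (h : ∃ l, ν l ≠ 0) :
    ∃ hc : cls ν < n, ν ⟨cls ν, hc⟩ ≠ 0 := by
  obtain ⟨l, hl⟩ := h
  have : Set.Nonempty {i : ℕ | ∃ hi : i < n, ν ⟨i, hi⟩ ≠ 0} := ⟨(l : ℕ), l.2, by simpa using hl⟩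
  exact Nat.sInf_mem this

lemma eq_zero_of_lt_cls {n : ℕ} {ν : Fin n → ℕ} {l : Fin n} (h : (l : ℕ) < cls ν) : ν l = 0 := by
  by_contra hne
  exact absurd (cls_le hne) (not_le.2 h)

lemma le_cls {n : ℕ} {ν : Fin n → ℕ} {c : ℕ} (hne : ∃ l, ν l ≠ 0)
    (h : ∀ l : Fin n, ν l ≠ 0 → c ≤ (l : ℕ)) : c ≤ cls ν := by
  obtain ⟨l, hl⟩ := hne
  refine le_csInf ⟨(l : ℕ), l.2, by simpa using hl⟩ ?_
  rintro b ⟨hb, hνb⟩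
  exact h ⟨b, hb⟩ hνb

lemma cls_mono {n : ℕ} {μ ν : Fin n → ℕ} (hle : ∀ i, μ i ≤ ν i) (hμ : ∃ l, μ l ≠ 0) :
    cls ν ≤ cls μ := by
  obtain ⟨hc, hval⟩ := cls_spec hμ
  have hν : ν ⟨cls μ, hc⟩ ≠ 0 := by
    have := hle ⟨cls μ, hc⟩
    omega
  simpa using cls_le hν

lemma invDvd_refl {n : ℕ} (ν : Fin n → ℕ) : InvDvd ν ν :=
  ⟨fun _ => le_rfl, fun _ _ => rfl⟩

lemma invDvd_trans {n : ℕ} {ρ μ ν : Fin n → ℕ} (hρ : ∃ l, ρ l ≠ 0)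
    (h1 : InvDvd ρ μ) (h2 : InvDvd μ ν) : InvDvd ρ ν := by
  have hcls : cls μ ≤ cls ρ := cls_mono h1.1 hρ
  refine ⟨fun i => (h1.1 i).trans (h2.1 i), fun i hi => ?_⟩
  rw [h2.2 i (lt_of_le_of_lt hcls hi), h1.2 i hi]

/-! ### The candidate Pommaret basis -/

/-- Decrement the exponent at the class index. -/
noncomputable def dec {n : ℕ} (ν : Fin n → ℕ) : Fin n → ℕ :=
  fun l => if (l : ℕ) = cls ν then ν l - 1 else ν l

lemma dec_le {n : ℕ} (ν : Fin n → ℕ) : ∀ l, dec ν l ≤ ν l := by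
  intro l
  unfold dec
  split <;> omega

lemma dec_apply_ne {n : ℕ} {ν : Fin n → ℕ} {l : Fin n} (h : (l : ℕ) ≠ cls ν) :
    dec ν l = ν l := if_neg h

lemma dec_apply_eq {n : ℕ} {ν : Fin n → ℕ} {l : Fin n} (h : (l : ℕ) = cls ν) :
    dec ν l = ν l - 1 := if_pos h

/-- The candidate Pommaret basis. -/
def PB {n : ℕ} (S : Set (Fin n → ℕ)) : Set (Fin n → ℕ) :=
  {ν | ν ∈ S ∧ dec ν ∉ S}

section Main

variable {n : ℕ} {S : Set (Fin n → ℕ)} (hS : IsMonIdeal S) (h0 : (0 : Fin n → ℕ) ∉ S)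

include h0 in
lemma mem_ne_zero {ν : Fin n → ℕ} (h : ν ∈ S) : ∃ l, ν l ≠ 0 := by
  by_contra hc
  push_neg at hc
  have : ν = 0 := funext fun l => hc l
  exact h0 (this ▸ h)

include h0 in
lemma invDvd_dec {ν : Fin n → ℕ} (hd : dec ν ∈ S) : InvDvd (dec ν) ν := by
  have hdne : ∃ l, dec ν l ≠ 0 := mem_ne_zero h0 hd
  have hcls : cls ν ≤ cls (dec ν) := by
    refine le_cls hdne fun l hl => ?_
    by_contra hlt
    push_neg at hlt
    have hz : ν l = 0 := eq_zero_of_lt_cls hlt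
    apply hl
    rw [dec_apply_ne (by omega)]
    exact hz
  refine ⟨dec_le ν, fun i hi => ?_⟩
  rw [dec_apply_ne (by omega)]

include hS h0 in
/-- Minimality: a member of `PB S` has no proper involutive divisor in `S`. -/
lemma pb_min {ν μ : Fin n → ℕ} (hν : ν ∈ PB S) (hμ : μ ∈ S) (h : InvDvd μ ν) : μ = ν := by
  by_contra hne
  apply hν.2
  refine hS μ hμ _ fun l => ?_
  obtain ⟨hcn, hvc⟩ := cls_spec (mem_ne_zero h0 hν.1)
  -- there is an index k where μ k < ν k, and (k : ℕ) ≥ cls ν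
  have hex : ∃ k : Fin n, μ k < ν k := by
    by_contra hk
    push_neg at hk
    exact hne (funext fun l => le_antisymm (h.1 l) (hk l))
  obtain ⟨k, hk⟩ := hex
  have hkc : cls ν ≤ (k : ℕ) := cls_le (by omega)
  have hmc : μ ⟨cls ν, hcn⟩ < ν ⟨cls ν, hcn⟩ := by
    rcases eq_or_lt_of_le hkc with heq | hlt
    · have : k = ⟨cls ν, hcn⟩ := Fin.ext heq.symm
      rw [← this]
      exact hk
    · -- k > cls ν, so cls μ ≥ k > cls ν, hence μ at cls ν is 0
      have hclsμ : (k : ℕ) ≤ cls μ := by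
        by_contra hcm
        push_neg at hcm
        exact absurd (h.2 k hcm) (by omega)
      have : μ ⟨cls ν, hcn⟩ = 0 := eq_zero_of_lt_cls (by simpa using lt_of_lt_of_le hlt hclsμ)
      omega
  rcases eq_or_ne ((l : ℕ)) (cls ν) with hsplit | hsplit
  · rw [dec_apply_eq hsplit]
    have : l = ⟨cls ν, hcn⟩ := Fin.ext hsplit
    rw [this]
    omega
  · rw [dec_apply_ne hsplit]
    exact h.1 l

/-- Comparison: two involutive divisors of the same monomial are comparable. -/
lemma invDvd_comp {n : ℕ} {ν h1 h2 : Fin n → ℕ} (hn1 : ∃ l, h1 l ≠ 0) (hn2 : ∃ l, h2 l ≠ 0)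
    (hd1 : InvDvd h1 ν) (hd2 : InvDvd h2 ν) : InvDvd h1 h2 ∨ InvDvd h2 h1 := by
  have key : ∀ g1 g2 : Fin n → ℕ, (∃ l, g2 l ≠ 0) → InvDvd g1 ν → InvDvd g2 ν →
      cls g1 ≤ cls g2 → (∀ l : Fin n, (l : ℕ) = cls g1 → g2 l ≤ g1 l) → InvDvd g2 g1 := by
    intro g1 g2 hg2 hdg1 hdg2 hcc htie
    constructor
    · intro l
      rcases lt_trichotomy ((l : ℕ)) (cls g1) with hl | hl | hl
      · have : g2 l = 0 := eq_zero_of_lt_cls (lt_of_lt_of_le hl hcc)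
        omega
      · exact htie l hl
      · rcases le_or_gt ((l : ℕ)) (cls g2) with hl2 | hl2
        · have e1 := hdg1.2 l hl
          have e2 := hdg2.1 l
          omega
        · have e1 := hdg1.2 l hl
          have e2 := hdg2.2 l hl2
          omega
    · intro l hl
      have e1 := hdg1.2 l (lt_of_le_of_lt hcc hl)
      have e2 := hdg2.2 l hl
      omega
  rcases lt_trichotomy (cls h1) (cls h2) with hc | hc | hc
  · right
    refine key h1 h2 hn2 hd1 hd2 (le_of_lt hc) fun l hl => ?_
    have : h2 l = 0 := eq_zero_of_lt_cls (by omega)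
    omega
  · obtain ⟨hcn, _⟩ := cls_spec hn1
    rcases le_total (h2 ⟨cls h1, hcn⟩) (h1 ⟨cls h1, hcn⟩) with hv | hv
    · right
      refine key h1 h2 hn2 hd1 hd2 (le_of_eq hc) fun l hl => ?_
      have : l = ⟨cls h1, hcn⟩ := Fin.ext hl
      rw [this]
      exact hv
    · left
      refine key h2 h1 hn1 hd2 hd1 (le_of_eq hc.symm) fun l hl => ?_
      have : l = ⟨cls h1, hcn⟩ := Fin.ext (by rw [hl, ← hc])
      rw [this]
      exact hv
  · left
    refine key h2 h1 hn1 hd2 hd1 (le_of_lt hc) fun l hl => ?_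
    have : h1 l = 0 := eq_zero_of_lt_cls (by omega)
    omega

omit hS in
include h0 in
/-- Every monomial of `S` has an involutive divisor in `PB S`. -/
lemma exists_pb_divisor {ν : Fin n → ℕ} (hν : ν ∈ S) : ∃ h ∈ PB S, InvDvd h ν := by
  generalize hd : (∑ l, ν l) = d
  induction d using Nat.strong_induction_on generalizing ν with
  | _ d ih =>
    by_cases hPB : ν ∈ PB S
    · exact ⟨ν, hPB, invDvd_refl ν⟩
    · have hdec : dec ν ∈ S := by
        by_contra hc
        exact hPB ⟨hν, hc⟩
      obtain ⟨hcn, hvc⟩ := cls_spec (mem_ne_zero h0 hν)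
      have hsum : (∑ l, dec ν l) < d := by
        rw [← hd]
        refine Finset.sum_lt_sum (fun i _ => dec_le ν i) ⟨⟨cls ν, hcn⟩, Finset.mem_univ _, ?_⟩
        rw [dec_apply_eq (by simp)]
        omega
      obtain ⟨h, hh, hdvd⟩ := ih _ hsum hdec rfl
      exact ⟨h, hh, invDvd_trans (mem_ne_zero h0 hh.1) hdvd (invDvd_dec h0 hdec)⟩

include hS h0 in
/-- Finiteness of the candidate Pommaret basis, given the stability-type condition. -/
lemma pb_finite
    (cond : ∀ μ ∈ S, ∀ i j : Fin n, i < j → μ i ≠ 0 →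
      ∃ t : ℕ, 0 < t ∧
        (fun l => if l = i then 0 else if l = j then μ l + t else μ l) ∈ S) :
    (PB S).Finite := by
  by_contra hfin
  have hinf : (PB S).Infinite := hfin
  let e := hinf.natEmbedding
  -- extract a pointwise-monotone subsequence (Dickson's lemma)
  have hpwo : Set.IsPWO (Set.univ : Set (Fin n → ℕ)) :=
    Set.isPWO_univ_iff.mpr inferInstance
  obtain ⟨g, hg⟩ := hpwo.exists_monotone_subseq
    (f := fun k => (e k : Fin n → ℕ)) (fun _ => Set.mem_univ _)
  set F : ℕ → Fin n → ℕ := fun k => (e (g k) : Fin n → ℕ) with hF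
  have hFmem : ∀ k, F k ∈ PB S := fun k => (e (g k)).2
  have hFmono : ∀ ⦃a b : ℕ⦄, a ≤ b → ∀ i, F a i ≤ F b i := by
    intro a b hab i
    exact hg hab i
  have hFinj : Function.Injective F := by
    intro a b hab
    exact g.injective (e.injective (Subtype.ext hab))
  -- make the class constant along the subsequence
  have hne : ∀ k, ∃ l, F k l ≠ 0 := fun k => mem_ne_zero h0 (hFmem k).1
  set c : ℕ := sInf (Set.range fun k => cls (F k)) with hc
  obtain ⟨k0, hk0⟩ : ∃ k0, cls (F k0) = c := by
    have : c ∈ Set.range fun k => cls (F k) := Nat.sInf_mem ⟨cls (F 0), 0, rfl⟩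
    exact this
  set T : ℕ → Fin n → ℕ := fun k => F (k0 + k) with hT
  have hTmem : ∀ k, T k ∈ PB S := fun k => hFmem _
  have hTmono : ∀ ⦃a b : ℕ⦄, a ≤ b → ∀ i, T a i ≤ T b i := fun a b hab i =>
    hFmono (by omega) i
  have hTinj : Function.Injective T := fun a b hab => by
    have := hFinj hab; omega
  have hTne : ∀ k, ∃ l, T k l ≠ 0 := fun k => hne _
  have hTcls : ∀ k, cls (T k) = c := by
    intro k
    refine le_antisymm ?_ ?_
    · rw [← hk0]
      exact cls_mono (hFmono (by omega)) (hne k0)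
    · exact Nat.sInf_le ⟨k0 + k, rfl⟩
  have hcn : c < n := by
    obtain ⟨h1, _⟩ := cls_spec (hTne 0)
    rw [hTcls 0] at h1
    exact h1
  have hTc : ∀ k, T k ⟨c, hcn⟩ ≠ 0 := by
    intro k
    obtain ⟨h1, h2⟩ := cls_spec (hTne k)
    have heq : (⟨cls (T k), h1⟩ : Fin n) = ⟨c, hcn⟩ := Fin.ext (by simp [hTcls k])
    rw [heq] at h2
    exact h2
  -- some coordinate is unbounded along the chain
  obtain ⟨j, hj⟩ : ∃ j : Fin n, ∀ M : ℕ, ∃ k, M ≤ T k j := by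
    by_contra hb
    push_neg at hb
    choose M hM using hb
    have hbox : (Set.pi Set.univ fun j => Set.Iio (M j)).Finite :=
      Set.Finite.pi fun j => Set.finite_Iio _
    haveI := hbox.to_subtype
    have hmemT : ∀ k, T k ∈ Set.pi Set.univ fun j => Set.Iio (M j) := by
      intro k j _
      exact hM j k
    obtain ⟨a, b, hab, heq⟩ := Finite.exists_ne_map_eq_of_infinite
      (fun k : ℕ => (⟨T k, hmemT k⟩ : ↥(Set.pi Set.univ fun j => Set.Iio (M j))))
    exact hab (hTinj (Subtype.mk_eq_mk.mp heq))
  -- the unbounded coordinate has index ≥ c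
  have hcj : c ≤ (j : ℕ) := by
    obtain ⟨k, hk⟩ := hj 1
    have hne' : T k j ≠ 0 := by omega
    have := cls_le hne'
    rw [hTcls k] at this
    exact this
  rcases eq_or_lt_of_le hcj with hcj' | hcj'
  · -- the class coordinate itself is unbounded: T k - e_c ≥ T 0, contradiction
    obtain ⟨k, hk⟩ := hj (T 0 j + 1)
    apply (hTmem k).2
    refine hS (T 0) (hTmem 0).1 _ fun l => ?_
    rcases eq_or_ne ((l : ℕ)) (cls (T k)) with hsplit | hsplit
    · rw [dec_apply_eq hsplit]
      have hlj : l = j := Fin.ext (by rw [hsplit, hTcls k, hcj'])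
      rw [hlj]
      omega
    · rw [dec_apply_ne hsplit]
      exact hTmono (Nat.zero_le k) l
  · -- c < j : use the hypothesis on T 0 with i the class
    have hij : (⟨c, hcn⟩ : Fin n) < j := hcj'
    obtain ⟨t, ht, hmem⟩ := cond (T 0) (hTmem 0).1 ⟨c, hcn⟩ j hij (hTc 0)
    obtain ⟨k, hk⟩ := hj (T 0 j + t)
    apply (hTmem k).2
    refine hS _ hmem _ fun l => ?_
    rcases eq_or_ne l (⟨c, hcn⟩ : Fin n) with rfl | hlc
    · simp
    · have hlc' : (l : ℕ) ≠ cls (T k) := by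
        rw [hTcls k]
        exact fun h => hlc (Fin.ext h)
      rw [dec_apply_ne hlc']
      rcases eq_or_ne l j with rfl | hlj
      · simp only [if_neg hlc, if_pos rfl]
        exact hk
      · simp only [if_neg hlc, if_neg hlj]
        exact hTmono (Nat.zero_le k) l

end Main

end QS

/-- A monomial ideal is quasi-stable if and only if for every monomial x^μ in
it and all indices i < j with x_i dividing x^μ, there is an integer t > 0 such
that x_j^t · x^μ / x_i^{μ_i} lies in the ideal. -/
theorem isQuasiStable_iff {n : ℕ} (S : Set (Fin n → ℕ))
    (hS : IsMonIdeal S) (h0 : (0 : Fin n → ℕ) ∉ S) :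
    IsQuasiStable S ↔
      ∀ μ ∈ S, ∀ i j : Fin n, i < j → μ i ≠ 0 →
        ∃ t : ℕ, 0 < t ∧
          (fun l => if l = i then 0 else if l = j then μ l + t else μ l) ∈ S := by
  constructor
  · rintro ⟨H, hgen, huniq⟩ μ hμ i j hij hμi
    -- the monomials μ·x_j^(t+1) are all in S
    have hmemt : ∀ t : ℕ, (fun l => if l = j then μ l + (t + 1) else μ l) ∈ S := by
      intro t
      refine hS μ hμ _ fun l => ?_
      split <;> omega
    choose h hhH hdvd using fun t : ℕ => (huniq _ (hmemt t)).exists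
    obtain ⟨a, b, hab, heqs⟩ := Finite.exists_ne_map_eq_of_infinite
      (fun t : ℕ => ((⟨h t, hhH t⟩ : {x // x ∈ H})))
    have heq' : h a = h b := congrArg Subtype.val heqs
    have hjcls : (j : ℕ) ≤ cls (h a) := by
      by_contra hcl
      push_neg at hcl
      have e1 := (hdvd a).2 j hcl
      have e2 := (hdvd b).2 j (heq' ▸ hcl)
      simp at e1 e2
      rw [← heq'] at e2
      omega
    have hij' : (i : ℕ) < (j : ℕ) := hij
    have hi0 : h a i = 0 := QS.eq_zero_of_lt_cls (by omega)
    refine ⟨a + 1, Nat.succ_pos a, ?_⟩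
    rw [hgen]
    refine ⟨h a, hhH a, fun l => ?_⟩
    have hdl := (hdvd a).1 l
    rcases eq_or_ne l i with rfl | hli
    · simp [hi0]
    · rcases eq_or_ne l j with rfl | hlj
      · simp only [if_neg hli, if_pos rfl]
        simpa using hdl
      · simp only [if_neg hli, if_neg hlj]
        simpa [hlj] using hdl
  · intro cond
    have hfin := QS.pb_finite hS h0 cond
    refine ⟨hfin.toFinset, ?_, ?_⟩
    · intro ν
      constructor
      · intro hν
        obtain ⟨h, hh, hdvd⟩ := QS.exists_pb_divisor h0 hν
        exact ⟨h, by simpa [Set.Finite.mem_toFinset] using hh, hdvd.1⟩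
      · rintro ⟨h, hh, hle⟩
        have hh' : h ∈ QS.PB S := by simpa [Set.Finite.mem_toFinset] using hh
        exact hS h hh'.1 ν hle
    · intro ν hν
      obtain ⟨h, hh, hdvd⟩ := QS.exists_pb_divisor h0 hν
      refine ⟨h, ⟨by simpa [Set.Finite.mem_toFinset] using hh, hdvd⟩, ?_⟩
      rintro h' ⟨hh', hdvd'⟩
      have hh'' : h' ∈ QS.PB S := by simpa [Set.Finite.mem_toFinset] using hh'
      have hn1 := QS.mem_ne_zero h0 hh''.1
      have hn2 := QS.mem_ne_zero h0 hh.1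
      rcases QS.invDvd_comp hn1 hn2 hdvd' hdvd with hcomp | hcomp
      · exact QS.pb_min hS h0 hh hh''.1 hcomp
      · exact (QS.pb_min hS h0 hh'' hh.1 hcomp).symm
end

section
/- Let H be a Pommaret basis of a quasi-stable ideal I, h ∈ H, and x_k a non-multiplicative variable of h. If h' is the unique involutive divisor in H of x_k·h, then cls(h') ≥ cls(h). -/
/-- If h' ∈ H is the involutive divisor of x_k · h, where h ∈ H and x_k is a
non-multiplicative variable of h, then cls h' ≥ cls h. -/
theorem cls_le_cls_of_invDvd_mul {n : ℕ} (H : Finset (Fin n → ℕ))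
    (hPB : ∀ ν, MemMonIdeal ↑H ν → ∃! g, g ∈ H ∧ InvDvd g ν)
    (h : Fin n → ℕ) (hh : h ∈ H) (k : Fin n) (hk : cls h < (k : ℕ))
    (h' : Fin n → ℕ) (hh' : h' ∈ H)
    (hdiv : InvDvd h' (fun i => if i = k then h i + 1 else h i)) :
    cls h ≤ cls h' := by
  by_contra hlt
  push_neg at hlt
  by_cases hne : {i : ℕ | ∃ hi : i < n, h' ⟨i, hi⟩ ≠ 0}.Nonempty
  · obtain ⟨hc'n, hc'⟩ : ∃ hi : cls h' < n, h' ⟨cls h', hi⟩ ≠ 0 := Nat.sInf_mem hne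
    set i : Fin n := ⟨cls h', hc'n⟩
    have hik : i ≠ k := by
      intro e
      have : (i : ℕ) = (k : ℕ) := by rw [e]
      simp only [i] at this
      omega
    have hhi : h i = 0 := by
      by_contra hne2
      have : cls h ≤ cls h' := Nat.sInf_le ⟨hc'n, hne2⟩
      omega
    have := hdiv.1 i
    simp only [if_neg hik, hhi] at this
    omega
  · have hz : cls h' = 0 := by
      unfold cls
      rw [Set.not_nonempty_iff_eq_empty] at hne
      rw [hne, Nat.sInf_empty]
    have hk0 : cls h' < (k : ℕ) := by omega
    have heq : h k + 1 = h' k := by simpa using hdiv.2 k hk0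
    have hz2 : h' k = 0 := by
      by_contra hne2
      exact hne ⟨(k : ℕ), k.isLt, by simpa using hne2⟩
    omega
end

section
/- The decomposition function of a quasi-stable ideal with respect to its Pommaret basis is regular: if H is a Pommaret basis, b : M(I) → H assigns to each monomial of I its unique involutive divisor in H, and set(h) denotes the set of non-multiplicative variables of h, then for every h ∈ H and every x_t ∈ set(h), one has set(b(x_t·h)) ⊆ set(h). -/
/-- The decomposition function of a quasi-stable ideal with respect to its
Pommaret basis is regular: if h ∈ H, x_t is a non-multiplicative variable of
h, and h' = b(x_t · h) is the unique involutive divisor in H of x_t · h, then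
the non-multiplicative variables of h' form a subset of those of h. -/
theorem decomposition_function_regular {n : ℕ} (H : Finset (Fin n → ℕ))
    (hPB : ∀ ν, MemMonIdeal ↑H ν → ∃! g, g ∈ H ∧ InvDvd g ν)
    (h : Fin n → ℕ) (hh : h ∈ H) (t : Fin n) (ht : cls h < (t : ℕ))
    (h' : Fin n → ℕ) (hh' : h' ∈ H)
    (hdiv : InvDvd h' (fun i => if i = t then h i + 1 else h i)) :
    {i : Fin n | cls h' < (i : ℕ)} ⊆ {i : Fin n | cls h < (i : ℕ)} := by
  intro i hi
  simp only [Set.mem_setOf_eq] at hi ⊢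
  by_cases hS : ∃ j : ℕ, ∃ hj : j < n, h' ⟨j, hj⟩ ≠ 0
  · have hmem : cls h' ∈ {j : ℕ | ∃ hj : j < n, h' ⟨j, hj⟩ ≠ 0} := Nat.sInf_mem hS
    obtain ⟨hlt, hne⟩ := hmem
    have hle : cls h ≤ cls h' := by
      by_contra hcon
      push_neg at hcon
      have h0 : h ⟨cls h', hlt⟩ = 0 := by
        have hnm := Nat.notMem_of_lt_sInf
          (s := {j : ℕ | ∃ hj : j < n, h ⟨j, hj⟩ ≠ 0}) hcon
        simp only [Set.mem_setOf_eq, not_exists] at hnm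
        exact not_not.mp (hnm hlt)
      have hnet : (⟨cls h', hlt⟩ : Fin n) ≠ t := by
        intro he
        have : cls h' = (t : ℕ) := by rw [← he]
        omega
      have hle2 := hdiv.1 ⟨cls h', hlt⟩
      simp only [if_neg hnet] at hle2
      omega
    omega
  · push_neg at hS
    exfalso
    have hc' : cls h' = 0 := by
      unfold cls
      convert Nat.sInf_empty
      ext j
      simp only [Set.mem_setOf_eq, Set.mem_empty_iff_false, iff_false, not_exists]
      intro hj
      exact not_not.mpr (hS j hj)
    have heq : h t + 1 = h' t := by
      have := hdiv.2 t (by omega)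
      simpa using this
    have hz : h' t = 0 := by
      have := hS t t.isLt
      simpa using this
    omega
end

section
/- A quasi-stable monomial ideal has linear quotients with respect to any P-ordering of its Pommaret basis: if H = (h_1,...,h_r) is P-ordered, then for each j, the colon ideal ⟨h_1's successors⟩ : ⟨h_j⟩ (in the iterated construction) is generated by a subset of the variables. -/
/-- Lexicographic comparison of exponent vectors: μ < ν if at the largest
index where they differ, the exponent of μ is smaller. -/
def LexLt {n : ℕ} (μ ν : Fin n → ℕ) : Prop :=
  ∃ k : Fin n, μ k < ν k ∧ ∀ j : Fin n, k < j → μ j = ν j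

/-- A P-ordering: sorted first by class, then lexicographically within each
class. -/
def POrdered {n r : ℕ} (h : Fin r → (Fin n → ℕ)) : Prop :=
  ∀ a b : Fin r, a < b →
    cls (h a) < cls (h b) ∨ (cls (h a) = cls (h b) ∧ LexLt (h a) (h b))

lemma cls_zero_of_lt {n : ℕ} {μ : Fin n → ℕ} {i : Fin n} (hi : (i : ℕ) < cls μ) : μ i = 0 := by
  by_contra hc
  have hmem : (i : ℕ) ∈ {i : ℕ | ∃ hi : i < n, μ ⟨i, hi⟩ ≠ 0} := ⟨i.2, by simpa using hc⟩
  have := Nat.sInf_le hmem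
  unfold cls at hi
  omega

lemma lexLt_asymm {n : ℕ} {μ ν : Fin n → ℕ} (h1 : LexLt μ ν) (h2 : LexLt ν μ) : False := by
  obtain ⟨k, hk, hk2⟩ := h1
  obtain ⟨l, hl, hl2⟩ := h2
  rcases lt_trichotomy k l with hkl | hkl | hkl
  · have := hk2 l hkl
    omega
  · subst hkl; omega
  · have := hl2 k hkl
    omega

lemma key_lemma {n r : ℕ} (h : Fin r → (Fin n → ℕ))
    (hPB : ∀ ν, MemMonIdeal (Set.range h) ν →
      ∃! g, g ∈ Set.range h ∧ InvDvd g ν)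
    (hord : POrdered h) (α : Fin r) (k : Fin n) (hk : cls (h α) < (k : ℕ)) :
    ∃ γ : Fin r, α < γ ∧ ∀ j, h γ j ≤ (if j = k then 1 else 0) + h α j := by
  classical
  set m : Fin n → ℕ := fun j => (if j = k then 1 else 0) + h α j with hm
  have hmem : MemMonIdeal (Set.range h) m := ⟨h α, ⟨α, rfl⟩, fun i => by simp [hm]⟩
  obtain ⟨g, ⟨⟨γ, rfl⟩, hinv⟩, _⟩ := hPB m hmem
  refine ⟨γ, ?_, fun j => hinv.1 j⟩
  have hmk : m k = h α k + 1 := by simp [hm, Nat.add_comm]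
  have hne : γ ≠ α := by
    rintro rfl
    have := hinv.2 k hk
    omega
  rcases lt_or_gt_of_ne hne with hlt | hgt
  · exfalso
    have hzero : ∀ i : Fin n, (i : ℕ) < cls (h α) → h γ i = 0 := by
      intro i hi
      have h1 : h γ i ≤ m i := hinv.1 i
      have h2 : h α i = 0 := cls_zero_of_lt hi
      have h3 : i ≠ k := by
        intro hik; subst hik; omega
      have h4 : m i = 0 := by simp [hm, h2, h3]
      omega
    rcases hord γ α hlt with hc | ⟨hc, hlex⟩
    · by_cases hγ0 : {i : ℕ | ∃ hi : i < n, h γ ⟨i, hi⟩ ≠ 0}.Nonempty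
      · have hmemc := Nat.sInf_mem hγ0
        obtain ⟨hlt2, hne2⟩ := hmemc
        exact hne2 (hzero ⟨sInf {i : ℕ | ∃ hi : i < n, h γ ⟨i, hi⟩ ≠ 0}, hlt2⟩ hc)
      · have hcls0 : cls (h γ) = 0 := by
          unfold cls
          rw [Set.not_nonempty_iff_eq_empty.mp hγ0]
          exact Nat.sInf_empty
        have hγk : h γ k = 0 := by
          by_contra hc
          exact hγ0 ⟨(k : ℕ), k.2, by simpa using hc⟩
        have := hinv.2 k (by omega)
        omega
    · refine lexLt_asymm ?_ hlex
      refine ⟨k, ?_, ?_⟩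
      · have := hinv.2 k (by omega)
        omega
      · intro j hj
        have hcj : cls (h γ) < (j : ℕ) := by
          have : (k : ℕ) < (j : ℕ) := hj
          omega
        have heq := hinv.2 j hcj
        have hjk : j ≠ k := by
          intro hjk; subst hjk
          exact absurd rfl (Fin.ne_of_gt hj)
        simp [hm, hjk] at heq
        omega
  · exact hgt

/-- A quasi-stable ideal has linear quotients with respect to a P-ordering of
its Pommaret basis: each colon ideal in the iterated construction is generated
by a subset of the variables (stated via membership of monomials). -/
theorem linear_quotients_of_pommaret {n r : ℕ} (h : Fin r → (Fin n → ℕ))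
    (hPB : ∀ ν, MemMonIdeal (Set.range h) ν →
      ∃! g, g ∈ Set.range h ∧ InvDvd g ν)
    (hord : POrdered h) (α : Fin r) :
    ∃ V : Set (Fin n), ∀ ν : Fin n → ℕ,
      (∃ β : Fin r, α < β ∧ ∀ i, h β i ≤ ν i + h α i) ↔
      ∃ i ∈ V, 0 < ν i := by
  classical
  refine ⟨{i : Fin n | ∃ γ : Fin r, α < γ ∧ ∀ j, h γ j ≤ (if j = i then 1 else 0) + h α j},
    fun ν => ⟨?_, ?_⟩⟩
  · rintro ⟨β, hαβ, hβle⟩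
    by_cases hex : ∃ k : Fin n, cls (h α) < (k : ℕ) ∧ 0 < ν k
    · obtain ⟨k, hk1, hk2⟩ := hex
      obtain ⟨γ, hγ1, hγ2⟩ := key_lemma h hPB hord α k hk1
      exact ⟨k, ⟨γ, hγ1, hγ2⟩, hk2⟩
    · exfalso
      push_neg at hex
      have hν0 : ∀ j : Fin n, cls (h α) < (j : ℕ) → ν j = 0 := fun j hj =>
        Nat.le_zero.mp (hex j hj)
      have hαinv : InvDvd (h α) (fun j => ν j + h α j) :=
        ⟨fun i => by show h α i ≤ ν i + h α i; omega, fun i hi => by show ν i + h α i = h α i; simp [hν0 i hi]⟩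
      have main : ∀ N : ℕ, ∀ β' : Fin r, r - (β' : ℕ) ≤ N → α < β' →
          (∀ j, h β' j ≤ ν j + h α j) → False := by
        intro N
        induction N with
        | zero =>
          intro β' hle _ _
          have := β'.2
          omega
        | succ N ih =>
          intro β' hle hαβ' hβ'le
          by_cases hid : InvDvd (h β') (fun j => ν j + h α j)
          · obtain ⟨g, hg, hu⟩ := hPB (fun j => ν j + h α j)
              ⟨h α, ⟨α, rfl⟩, fun i => by show h α i ≤ ν i + h α i; omega⟩
            have e1 : h α = g := hu _ ⟨⟨α, rfl⟩, hαinv⟩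
            have e2 : h β' = g := hu _ ⟨⟨β', rfl⟩, hid⟩
            have heq : h α = h β' := e1.trans e2.symm
            rcases hord α β' hαβ' with hc | ⟨_, hlex⟩
            · rw [heq] at hc; omega
            · rw [heq] at hlex; exact lexLt_asymm hlex hlex
          · have h2 : ¬ ∀ i : Fin n, cls (h β') < (i : ℕ) → ν i + h α i = h β' i :=
              fun hh => hid ⟨fun i => hβ'le i, hh⟩
            push_neg at h2
            obtain ⟨k, hk1, hk2⟩ := h2
            have hklt : h β' k < ν k + h α k := lt_of_le_of_ne (hβ'le k) (fun he => hk2 he.symm)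
            obtain ⟨δ, hδ1, hδ2⟩ := key_lemma h hPB hord β' k hk1
            have hvlt : (β' : ℕ) < (δ : ℕ) := hδ1
            refine ih δ (by omega) (hαβ'.trans hδ1) (fun j => ?_)
            have := hδ2 j
            by_cases hjk : j = k
            · subst hjk; simp at this; omega
            · simp [hjk] at this
              exact le_trans this (hβ'le j)
      exact main r β (by omega) hαβ hβle
  · rintro ⟨i, ⟨γ, hγ1, hγ2⟩, hνi⟩
    refine ⟨γ, hγ1, fun j => ?_⟩
    have := hγ2 j
    by_cases hji : j = i
    · subst hji; simp at this; omega
    · simp [hji] at this; omega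
end
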